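/- Let G be a virtually abelian, finitely generated K-CSA group containing an element of infinite order, and suppose that for all x, y ∈ G the subgroup ⟨x^{K!}, y^{K!}⟩ is cyclic. Then G is virtually cyclic. -/

import Mathlib

/-- A subgroup `M` is virtually abelian if it has an abelian subgroup of finite index. -/
def IsVirtAbelian {G : Type*} [Group G] (M : Subgroup G) : Prop :=
  ∃ A : Subgroup G, A ≤ M ∧ (∀ x ∈ A, ∀ y ∈ A, x * y = y * x) ∧ A.relIndex M ≠ 0

/-- A subgroup `M` is `K`-virtually abelian if it has an abelian subgroup of index at most `K`. -/
def IsKVirtAbelian {G : Type*} [Group G] (K : ℕ) (M : Subgroup G) : Prop :=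
  ∃ A : Subgroup G, A ≤ M ∧ (∀ x ∈ A, ∀ y ∈ A, x * y = y * x) ∧
    A.relIndex M ≠ 0 ∧ A.relIndex M ≤ K

/-- `M` is `K`-virtually torsion-free abelian: it has a torsion-free abelian subgroup of
index at most `K`. -/
def IsKVirtTorsionFreeAbelian {G : Type*} [Group G] (K : ℕ) (M : Subgroup G) : Prop :=
  ∃ A : Subgroup G, A ≤ M ∧ (∀ x ∈ A, ∀ y ∈ A, x * y = y * x) ∧
    (∀ x ∈ A, x ≠ 1 → ¬ IsOfFinOrder x) ∧ A.relIndex M ≠ 0 ∧ A.relIndex M ≤ K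

/-- `M` is the (unique) maximal virtually abelian subgroup containing `g`: it is virtually
abelian, contains `g`, and contains every virtually abelian subgroup containing `g`. -/
def IsMaxVirtAbelianOf {G : Type*} [Group G] (g : G) (M : Subgroup G) : Prop :=
  g ∈ M ∧ IsVirtAbelian M ∧ ∀ M' : Subgroup G, g ∈ M' → IsVirtAbelian M' → M' ≤ M

/-- `G` is a `K`-CSA group: every finite subgroup has order at most `K`; every element of
infinite order lies in a unique maximal virtually abelian subgroup `M(g)`, which is
`K`-virtually torsion-free abelian and equal to its own normalizer. -/
def IsKCSAGroup (K : ℕ) (G : Type*) [Group G] : Prop :=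
  0 < K ∧
  (∀ H : Subgroup G, (H : Set G).Finite → Nat.card H ≤ K) ∧
  (∀ g : G, ¬ IsOfFinOrder g → ∃ M : Subgroup G,
    IsMaxVirtAbelianOf g M ∧ IsKVirtTorsionFreeAbelian K M ∧ Subgroup.normalizer (M : Set G) = M)

/-- A virtually abelian, finitely generated `K`-CSA group with an element of infinite order,
in which every `⟨x^{K!}, y^{K!}⟩` is cyclic, is virtually cyclic. -/
theorem stmt_7 {G : Type*} [Group G] [Group.FG G] {K : ℕ} (hG : IsKCSAGroup K G)
    (hva : IsVirtAbelian (⊤ : Subgroup G))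
    (hinf : ∃ g : G, ¬ IsOfFinOrder g)
    (hcyc : ∀ x y : G,
      IsCyclic (Subgroup.closure ({x ^ K.factorial, y ^ K.factorial} : Set G))) :
    ∃ c : G, (Subgroup.zpowers c).FiniteIndex := by
  classical
  obtain ⟨A, -, hcomm, hidx⟩ := hva
  rw [Subgroup.relIndex_top_right] at hidx
  set n := K.factorial with hn
  have hnpos : 0 < n := K.factorial_pos
  haveI : A.FiniteIndex := ⟨hidx⟩
  haveI : Group.FG ↥A := Subgroup.fg_of_index_ne_zero A
  -- the set of n-th powers of elements of A is a subgroup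
  let P : Subgroup G :=
    { carrier := (fun a => a ^ n) '' (A : Set G)
      one_mem' := ⟨1, A.one_mem, one_pow n⟩
      mul_mem' := by
        rintro _ _ ⟨a, ha, rfl⟩ ⟨b, hb, rfl⟩
        exact ⟨a * b, A.mul_mem ha hb, Commute.mul_pow (hcomm a ha b hb) n⟩
      inv_mem' := by
        rintro _ ⟨a, ha, rfl⟩
        exact ⟨a⁻¹, A.inv_mem ha, inv_pow a n⟩ }
  -- every pair of n-th powers of elements of A generates a cyclic subgroup whose
  -- generator is itself an n-th power of an element of A
  have pair : ∀ x ∈ A, ∀ y ∈ A, ∃ c ∈ P,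
      Subgroup.closure ({x ^ n, y ^ n} : Set G) = Subgroup.zpowers c := by
    intro x hx y hy
    obtain ⟨⟨c, hcmem⟩, hgen⟩ := (hcyc x y).exists_generator
    refine ⟨c, ?_, le_antisymm ?_ (Subgroup.zpowers_le.mpr hcmem)⟩
    · have hle : Subgroup.closure ({x ^ n, y ^ n} : Set G) ≤ P := by
        rw [Subgroup.closure_le]
        rintro z (rfl | rfl)
        · exact ⟨x, hx, rfl⟩
        · exact ⟨y, hy, rfl⟩
      exact hle hcmem
    · intro z hz
      obtain ⟨k, hk⟩ := hgen ⟨z, hz⟩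
      exact ⟨k, congrArg Subtype.val hk⟩
  -- a finite generating set of A
  obtain ⟨S, hSA, hSfin⟩ := (Subgroup.fg_iff A).mp ((Group.fg_iff_subgroup_fg A).mp inferInstance)
  -- by induction, all n-th powers of generators lie in a common cyclic subgroup
  -- generated by an n-th power of an element of A
  have key : ∀ T : Set G, T.Finite → T ⊆ (A : Set G) →
      ∃ a ∈ A, ∀ t ∈ T, t ^ n ∈ Subgroup.zpowers (a ^ n) := by
    intro T hTfin
    refine Set.Finite.induction_on _ hTfin
      (fun _ => ⟨1, A.one_mem, fun t ht => absurd ht (Set.notMem_empty t)⟩) ?_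
    intro x T hx hTfin IH hsub
    obtain ⟨a, ha, hall⟩ := IH (fun t ht => hsub (Set.mem_insert_of_mem x ht))
    obtain ⟨c, hcP, hcl⟩ := pair a ha x (hsub (Set.mem_insert x T))
    obtain ⟨b, hb, rfl⟩ := hcP
    refine ⟨b, hb, ?_⟩
    have han : a ^ n ∈ Subgroup.zpowers (b ^ n) := by
      rw [← hcl]; exact Subgroup.subset_closure (by left; rfl)
    have hxn : x ^ n ∈ Subgroup.zpowers (b ^ n) := by
      rw [← hcl]; exact Subgroup.subset_closure (by right; rfl)
    rintro t (rfl | ht)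
    · exact hxn
    · exact Subgroup.zpowers_le.mpr han (hall t ht)
  obtain ⟨a, ha, hall⟩ := key S hSfin (by rw [← hSA]; exact Subgroup.subset_closure)
  -- every n-th power of an element of A lies in zpowers (a ^ n)
  have Hall : ∀ x ∈ A, x ^ n ∈ Subgroup.zpowers (a ^ n) := by
    intro x hxA
    rw [← hSA] at hxA
    refine Subgroup.closure_induction (fun t ht => hall t ht)
      (by rw [one_pow]; exact Subgroup.one_mem _) ?_ ?_ hxA
    · intro x y hx hy px py
      have hx' : x ∈ A := by rw [← hSA]; exact hx
      have hy' : y ∈ A := by rw [← hSA]; exact hy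
      rw [Commute.mul_pow (hcomm x hx' y hy')]
      exact Subgroup.mul_mem _ px py
    · intro x hx px
      rw [inv_pow]
      exact Subgroup.inv_mem _ px
  -- conclude: zpowers (a ^ n) has finite index
  letI : CommGroup ↥A :=
    { (inferInstance : Group ↥A) with
      mul_comm := fun x y => Subtype.ext (hcomm x x.2 y y.2) }
  set N : Subgroup ↥A := (Subgroup.zpowers (a ^ n)).subgroupOf A with hN
  haveI : N.Normal := inferInstance
  have htor : Monoid.IsTorsion (↥A ⧸ N) := by
    intro q
    induction q using QuotientGroup.induction_on with
    | _ x =>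
        refine isOfFinOrder_iff_pow_eq_one.mpr ⟨n, hnpos, ?_⟩
        rw [← QuotientGroup.mk_pow, QuotientGroup.eq_one_iff]
        rw [hN, Subgroup.mem_subgroupOf]
        have : ((x ^ n : ↥A) : G) = (x : G) ^ n := by push_cast; rfl
        rw [this]
        exact Hall (x : G) x.2
  haveI : Finite (↥A ⧸ N) := CommGroup.finite_of_fg_torsion _ htor
  have hrel : (Subgroup.zpowers (a ^ n)).relIndex A ≠ 0 :=
    Subgroup.index_ne_zero_of_finite (H := N)
  refine ⟨a ^ n, ⟨?_⟩⟩
  have hle : Subgroup.zpowers (a ^ n) ≤ A := Subgroup.zpowers_le.mpr (A.pow_mem ha n)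
  rw [← Subgroup.relIndex_mul_index hle]
  exact Nat.mul_ne_zero hrel hidx
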